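/- arXiv:1102.4225 — 2 statements merged into one kernel-verified Lean document; each statement's English description precedes it below -/
import Mathlib

section
/- If two equal-length words α of type 2(i)(i-1) and α' of type 2(j)(j-1) or 2(j)(j) are component-wise ~₁-equivalent and have different numbers of occurrences of s_gen or s_tr, then {type of α, type of α'} = {2(i)(i-1), 2(i)(i)} for some i ≥ 1. -/
lemma count_join_rep {S : Type*} [DecidableEq S] (x g t : S) (n : ℕ) :
    ((List.replicate n [g, t]).flatten).count x
      = n * ((if g = x then 1 else 0) + (if t = x then 1 else 0)) := by
  induction n with
  | zero => simp
  | succ n ih => simp [List.replicate_succ, List.count_cons, ih]; ring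

lemma forall2_count_eq {S : Type*} [DecidableEq S] (g : S) {l l' : List S}
    (h : List.Forall₂ (fun s s' => s = g ↔ s' = g) l l') :
    l.count g = l'.count g := by
  induction h with
  | nil => rfl
  | @cons a b l l' hab _ ih =>
      by_cases ha : a = g
      · simp [List.count_cons, ha, hab.mp ha, ih]
      · simp [List.count_cons, ha, (show ¬ b = g from fun hb => ha (hab.mpr hb)), ih]


/-- `α` is of type 2(i)(i-1): `α = s_init (s_gen s_tr)^(i-1) s_gen β` with `β`
containing no `s_gen` or `s_tr`. -/
def TypeGenTr1 {S : Type*} (s_init s_gen s_tr : S) (i : ℕ) (α : List S) : Prop :=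
  ∃ β : List S,
    α = s_init :: (List.flatten (List.replicate (i - 1) [s_gen, s_tr])) ++ s_gen :: β ∧
      s_gen ∉ β ∧ s_tr ∉ β

/-- `α` is of type 2(i)(i): `α = s_init (s_gen s_tr)^i β` with `β` containing
no `s_gen` or `s_tr`. -/
def TypeGenTr2 {S : Type*} (s_init s_gen s_tr : S) (i : ℕ) (α : List S) : Prop :=
  ∃ β : List S,
    α = s_init :: (List.flatten (List.replicate i [s_gen, s_tr])) ++ β ∧
      s_gen ∉ β ∧ s_tr ∉ β

/-- Claim 1(3): if two equal-length words, one of type 2(i)(i-1) and the other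
of type 2(j)(j-1) or 2(j)(j), are component-wise `∼₁`-equivalent (`s ∼₁ s'` iff
(`s = s_gen` ⟺ `s' = s_gen`)) and have different numbers of occurrences of
`s_gen` or of `s_tr`, then `{type of α, type of α'} = {2(k)(k-1), 2(k)(k)}`
for some `k ≥ 1`. -/
theorem sim1_types_differ_by_one {S : Type*} [DecidableEq S]
    (s_init s_gen s_tr : S) (i j : ℕ) (hi : 1 ≤ i) (hj : 1 ≤ j)
    (α α' : List S)
    (hα : TypeGenTr1 s_init s_gen s_tr i α)
    (hα' : TypeGenTr1 s_init s_gen s_tr j α' ∨ TypeGenTr2 s_init s_gen s_tr j α')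
    (hlen : α.length = α'.length)
    (hcount : α.count s_gen ≠ α'.count s_gen ∨ α.count s_tr ≠ α'.count s_tr)
    (hsim : List.Forall₂ (fun s s' => s = s_gen ↔ s' = s_gen) α α') :
    ∃ k : ℕ, 1 ≤ k ∧
      ((TypeGenTr1 s_init s_gen s_tr k α ∧ TypeGenTr2 s_init s_gen s_tr k α') ∨
       (TypeGenTr2 s_init s_gen s_tr k α ∧ TypeGenTr1 s_init s_gen s_tr k α')) := by
  have hgeq := forall2_count_eq s_gen hsim
  obtain ⟨β, hαe, hβg, hβt⟩ := hα
  rcases hα' with ⟨β', hαe', hβg', hβt'⟩ | ⟨β', hαe', hβg', hβt'⟩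
  · exfalso
    subst hαe hαe'
    simp only [List.count_append, List.count_cons, count_join_rep, if_pos rfl,
      List.count_eq_zero_of_not_mem hβg, List.count_eq_zero_of_not_mem hβt,
      List.count_eq_zero_of_not_mem hβg', List.count_eq_zero_of_not_mem hβt'] at hgeq hcount
    by_cases h1 : s_init = s_gen <;> by_cases h2 : s_init = s_tr <;>
      by_cases h3 : s_tr = s_gen <;>
      simp_all <;> omega
  · subst hαe hαe'
    have hij : i = j := by
      simp only [List.count_append, List.count_cons, count_join_rep, if_pos rfl,
        List.count_eq_zero_of_not_mem hβg, List.count_eq_zero_of_not_mem hβt,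
        List.count_eq_zero_of_not_mem hβg', List.count_eq_zero_of_not_mem hβt'] at hgeq hcount
      by_cases h1 : s_init = s_gen <;> by_cases h2 : s_init = s_tr <;>
        by_cases h3 : s_tr = s_gen <;>
        simp_all <;> omega
    subst hij
    exact ⟨i, hi, Or.inl ⟨⟨β, rfl, hβg, hβt⟩, ⟨β', rfl, hβg', hβt'⟩⟩⟩
end

section
/- A word of type 2(i)(i-1) and a word of type 2(j)(j-1) with i ≠ j cannot be component-wise ~₁-equivalent (they differ at the position of the max(i,j)-th occurrence of s_gen whenever they have equal length, or trivially if lengths differ). -/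
lemma forall2_count {S : Type*} [DecidableEq S] (g : S) :
    ∀ {l l' : List S}, List.Forall₂ (fun s s' => s = g ↔ s' = g) l l' →
      l.count g = l'.count g := by
  intro l l' h
  induction h with
  | nil => rfl
  | @cons a b l1 l2 hab _ ih =>
    simp only [List.count_cons, ih]
    have : (a = g) = (b = g) := propext hab
    by_cases hx : a = g
    · simp [hx, hab.mp hx]
    · simp [hx]; exact fun hb => hx (hab.mpr hb)

lemma count_type {S : Type*} [DecidableEq S] (s_init s_gen s_tr : S)
    (hd1 : s_init ≠ s_gen) (hd3 : s_gen ≠ s_tr) (i : ℕ) (hi : 1 ≤ i) (α : List S)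
    (hα : TypeGenTr1 s_init s_gen s_tr i α) : α.count s_gen = i := by
  obtain ⟨β, rfl, hb1, hb2⟩ := hα
  simp [List.count_cons, List.count_append, List.count_flatten, hd1.symm, hd3,
    List.count_eq_zero.mpr hb1, Ne.symm hd1]
  rw [if_neg hd1]
  omega

/-- A word of type 2(i)(i-1) and a word of type 2(j)(j-1) with `i ≠ j` cannot
be component-wise `∼₁`-equivalent, where `s ∼₁ s'` iff
(`s = s_gen` ⟺ `s' = s_gen`) and `s_init`, `s_gen`, `s_tr` are pairwise
distinct. -/
theorem distinct_gen_counts_not_sim1 {S : Type*}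
    (s_init s_gen s_tr : S)
    (hd1 : s_init ≠ s_gen) (hd2 : s_init ≠ s_tr) (hd3 : s_gen ≠ s_tr)
    (i j : ℕ) (hi : 1 ≤ i) (hj : 1 ≤ j) (hij : i ≠ j)
    (α α' : List S)
    (hα : TypeGenTr1 s_init s_gen s_tr i α)
    (hα' : TypeGenTr1 s_init s_gen s_tr j α') :
    ¬ List.Forall₂ (fun s s' => s = s_gen ↔ s' = s_gen) α α' := by
  classical
  intro h
  have := forall2_count s_gen h
  rw [count_type s_init s_gen s_tr hd1 hd3 i hi α hα,
      count_type s_init s_gen s_tr hd1 hd3 j hj α' hα'] at this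
  exact hij this
end
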